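/- arXiv:1011.5215 — 3 statements merged into one kernel-verified Lean document; each statement's English description precedes it below -/
import Mathlib

section
/- In the algebra of operators on functions Z_2^n → Z_2, the commutation relation y^b m^c = Σ_{b_1 ⊆ b_2 ⊆ b} m^{c + b_2} y^{b_1} holds, where y^b = ∏_{i∈b} ∂_i and m^c is multiplication by the indicator of the point c, and c + b_2 is symmetric difference. -/
open Finset

/-- The space of all functions `Z_2^n → Z_2`. -/
abbrev V (n : ℕ) : Type := (Fin n → ZMod 2) → ZMod 2

/-- Indicator vector of a subset of `[n]`, identifying `P[n]` with `Z_2^n`. -/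
def ind {n : ℕ} (a : Finset (Fin n)) : Fin n → ZMod 2 :=
  fun i => if i ∈ a then 1 else 0

/-- `m^a`: the indicator function of the single point `a`. -/
def mFun {n : ℕ} (a : Finset (Fin n)) : V n :=
  fun b => if b = ind a then 1 else 0

/-- `x^a`: the monomial function, `x^a(b) = 1` iff `a ⊆ b`. -/
def xFun {n : ℕ} (a : Finset (Fin n)) : V n :=
  fun b => if ∀ i ∈ a, b i = 1 then 1 else 0

/-- `w^a = ∏_{i ∈ a} (x_i + 1)`: `w^a(b) = 1` iff `b ⊆ [n] \ a`. -/
def wFun {n : ℕ} (a : Finset (Fin n)) : V n :=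
  fun b => if ∀ i ∈ a, b i = 0 then 1 else 0

/-- The shift operator `s_i`, `(s_i f)(x) = f(x + e_i)`. -/
def shiftOp {n : ℕ} (i : Fin n) : Module.End (ZMod 2) (V n) where
  toFun f := fun x => f (x + Pi.single i 1)
  map_add' f g := rfl
  map_smul' c f := by funext x; rfl

/-- The Boolean partial derivative `∂_i`, `(∂_i f)(x) = f(x + e_i) + f(x)`. -/
def derivOp {n : ℕ} (i : Fin n) : Module.End (ZMod 2) (V n) where
  toFun f := fun x => f (x + Pi.single i 1) + f x
  map_add' f g := by
    funext x
    show (f + g) _ + (f + g) _ = _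
    simp only [Pi.add_apply]
    ring
  map_smul' c f := by
    funext x
    show (c • f) _ + (c • f) _ = _
    simp only [Pi.smul_apply, RingHom.id_apply, smul_eq_mul]
    ring

lemma derivOp_eq_shiftOp_add_one {n : ℕ} (i : Fin n) :
    derivOp (n := n) i = shiftOp i + 1 :=
  LinearMap.ext fun _ => rfl

lemma shiftOp_comm {n : ℕ} (i j : Fin n) : Commute (shiftOp i) (shiftOp (n := n) j) := by
  apply LinearMap.ext; intro f; funext x
  show f (x + Pi.single i 1 + Pi.single j 1) = f (x + Pi.single j 1 + Pi.single i 1)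
  rw [add_right_comm]

lemma derivOp_comm {n : ℕ} (i j : Fin n) : Commute (derivOp i) (derivOp (n := n) j) := by
  rw [derivOp_eq_shiftOp_add_one, derivOp_eq_shiftOp_add_one]
  exact ((shiftOp_comm i j).add_right (Commute.one_right _)).add_left
    ((Commute.one_left _).add_right (Commute.one_right _))

/-- `∂^b = ∏_{i ∈ b} ∂_i`. -/
def derivPow {n : ℕ} (b : Finset (Fin n)) : Module.End (ZMod 2) (V n) :=
  b.noncommProd derivOp (fun i _ j _ _ => derivOp_comm i j)

/-- `s^b = ∏_{i ∈ b} s_i`. -/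
def shiftPow {n : ℕ} (b : Finset (Fin n)) : Module.End (ZMod 2) (V n) :=
  b.noncommProd shiftOp (fun i _ j _ _ => shiftOp_comm i j)

/-- The operator of multiplication by a function `g`. -/
noncomputable def mulOp {n : ℕ} (g : V n) : Module.End (ZMod 2) (V n) :=
  LinearMap.mulLeft (ZMod 2) g

/-- `X_i`: multiplication by the `i`-th coordinate function. -/
noncomputable def XOp {n : ℕ} (i : Fin n) : Module.End (ZMod 2) (V n) :=
  mulOp (fun x => x i)

lemma ind_symmDiff {n : ℕ} (a b : Finset (Fin n)) :
    ind (symmDiff a b) = ind a + ind b := by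
  funext j
  simp only [ind, Pi.add_apply, Finset.mem_symmDiff]
  by_cases ha : j ∈ a <;> by_cases hb : j ∈ b <;> simp [ha, hb] <;> decide

lemma ind_singleton {n : ℕ} (i : Fin n) : ind ({i} : Finset (Fin n)) = Pi.single i 1 := by
  funext j
  simp [ind, Pi.single_apply, eq_comm]

lemma single_add_single {n : ℕ} (i : Fin n) :
    (Pi.single i 1 : Fin n → ZMod 2) + Pi.single i 1 = 0 := by
  rw [← Pi.single_add, show (1 + 1 : ZMod 2) = 0 from rfl, Pi.single_zero]

lemma mFun_shift {n : ℕ} (a : Finset (Fin n)) (i : Fin n) (x : Fin n → ZMod 2) :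
    mFun a (x + Pi.single i 1) = mFun (symmDiff a {i}) x := by
  unfold mFun
  congr 1
  simp only [ind_symmDiff, ind_singleton, eq_iff_iff]
  constructor
  · intro h
    rw [← h, add_assoc, single_add_single, add_zero]
  · intro h
    rw [h, add_assoc, single_add_single, add_zero]

lemma derivOp_mul_mulOp {n : ℕ} (i : Fin n) (a : Finset (Fin n)) :
    derivOp i * mulOp (mFun a) =
      mulOp (mFun a) + mulOp (mFun (symmDiff a {i}))
        + mulOp (mFun (symmDiff a {i})) * derivOp i := by
  apply LinearMap.ext; intro f; funext x
  show mFun a (x + Pi.single i 1) * f (x + Pi.single i 1) + mFun a x * f x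
      = mFun a x * f x + mFun (symmDiff a {i}) x * f x
        + mFun (symmDiff a {i}) x * (f (x + Pi.single i 1) + f x)
  rw [mFun_shift]
  have h2 : (2 : ZMod 2) = 0 := rfl
  linear_combination (-(mFun (symmDiff a {i}) x * f x)) * h2

lemma derivPow_insert {n : ℕ} (i : Fin n) (s : Finset (Fin n)) (hi : i ∉ s) :
    derivPow (insert i s) = derivOp i * derivPow s :=
  Finset.noncommProd_insert_of_notMem s i derivOp _ hi

lemma symmDiff_insert {n : ℕ} (c b2 : Finset (Fin n)) (i : Fin n) (hi : i ∉ b2) :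
    symmDiff c (insert i b2) = symmDiff (symmDiff c b2) {i} := by
  rw [symmDiff_assoc]
  congr 1
  ext j
  simp only [Finset.mem_insert, Finset.mem_symmDiff, Finset.mem_singleton]
  constructor
  · rintro (rfl | h)
    · exact Or.inr ⟨rfl, fun hj => hi hj⟩
    · exact Or.inl ⟨h, fun hj => hi (hj ▸ h)⟩
  · rintro (⟨h, _⟩ | ⟨rfl, _⟩)
    · exact Or.inr h
    · exact Or.inl rfl

lemma powerset_disjoint {n : ℕ} (i : Fin n) (s : Finset (Fin n)) (hi : i ∉ s) :
    Disjoint s.powerset (s.powerset.image (insert i)) := by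
  rw [Finset.disjoint_left]
  intro a ha hb
  obtain ⟨t, _, rfl⟩ := Finset.mem_image.mp hb
  exact hi (Finset.mem_powerset.mp ha (Finset.mem_insert_self i t))

lemma insert_inj_on_powerset {n : ℕ} (i : Fin n) (s : Finset (Fin n)) (hi : i ∉ s) :
    ∀ x ∈ s.powerset, ∀ y ∈ s.powerset, insert i x = insert i y → x = y := by
  intro x hx y hy h
  have hix : i ∉ x := fun hc => hi (Finset.mem_powerset.mp hx hc)
  have hiy : i ∉ y := fun hc => hi (Finset.mem_powerset.mp hy hc)
  have := congrArg (·.erase i) h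
  simpa [Finset.erase_insert hix, Finset.erase_insert hiy] using this

/-- `y^b m^c = Σ_{b₁ ⊆ b₂ ⊆ b} m^{c + b₂} y^{b₁}` (symmetric difference `+`). -/
theorem derivPow_mul_mOp (n : ℕ) (b c : Finset (Fin n)) :
    derivPow b * mulOp (mFun c) =
      ∑ b2 ∈ b.powerset, ∑ b1 ∈ b2.powerset,
        mulOp (mFun (symmDiff c b2)) * derivPow b1 := by
  induction b using Finset.induction_on generalizing c with
  | empty =>
    have hc : symmDiff c ∅ = c := by ext j; simp [Finset.mem_symmDiff]
    simp [derivPow, Finset.powerset_empty, hc]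
    rfl
  | @insert i s hi ih =>
    rw [derivPow_insert i s hi, mul_assoc, ih, Finset.mul_sum,
      Finset.powerset_insert, Finset.sum_union (powerset_disjoint i s hi),
      Finset.sum_image (insert_inj_on_powerset i s hi), ← Finset.sum_add_distrib]
    apply Finset.sum_congr rfl
    intro b2 hb2
    have hib2 : i ∉ b2 := fun h => hi (Finset.mem_powerset.mp hb2 h)
    rw [Finset.mul_sum, Finset.powerset_insert,
      Finset.sum_union (powerset_disjoint i b2 hib2),
      Finset.sum_image (insert_inj_on_powerset i b2 hib2),
      ← Finset.sum_add_distrib, ← Finset.sum_add_distrib]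
    apply Finset.sum_congr rfl
    intro b1 hb1
    have hib1 : i ∉ b1 := fun h => hib2 (Finset.mem_powerset.mp hb1 h)
    rw [← mul_assoc, derivOp_mul_mulOp, derivPow_insert i b1 hib1,
      symmDiff_insert c b2 i hib2]
    noncomm_ring
end

section
/- In the algebra of operators on functions Z_2^n → Z_2, for subsets a,b,c,d of [n] the identity m^a y^b m^c y^d = Σ m^a y^e holds, where the sum is over subsets e with d ⊆ e and e \ d ⊆ a + c ⊆ b (a + c denotes symmetric difference); in particular the product is 0 unless a + c ⊆ b. -/
open Finset

section Aux

lemma ind_add {n : ℕ} (s t : Finset (Fin n)) : ind s + ind t = ind (symmDiff s t) := by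
  funext i
  by_cases hs : i ∈ s <;> by_cases ht : i ∈ t <;>
    simp [ind, Finset.mem_symmDiff, hs, ht] <;> decide

lemma ind_injective {n : ℕ} : Function.Injective (ind (n := n)) := by
  intro s t h
  ext i
  have h' := congrFun h i
  by_cases hs : i ∈ s <;> by_cases ht : i ∈ t <;> simp_all [ind]

lemma ind_empty {n : ℕ} : ind (∅ : Finset (Fin n)) = 0 := by
  funext i; simp [ind]

lemma derivPow_apply {n : ℕ} (b : Finset (Fin n)) (f : V n) (x : Fin n → ZMod 2) :
    derivPow b f x = ∑ s ∈ b.powerset, f (x + ind s) := by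
  induction b using Finset.induction_on generalizing f x with
  | empty => rw [show derivPow (∅ : Finset (Fin n)) = 1 from Finset.noncommProd_empty _ _]; simp [ind_empty]
  | @insert i b hi ih =>
    rw [show derivPow (insert i b) = derivOp i * derivPow b from Finset.noncommProd_insert_of_notMem _ _ _ _ hi]
    show derivOp i (derivPow b f) x = _
    rw [Finset.sum_powerset_insert hi]
    show derivPow b f (x + Pi.single i 1) + derivPow b f x = _
    rw [ih, ih, add_comm]
    congr 1
    apply Finset.sum_congr rfl
    intro s hs
    rw [Finset.mem_powerset] at hs
    have his : i ∉ s := fun h => hi (hs h)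
    have : ind (insert i s) = Pi.single i 1 + ind s := by
      have h1 : insert i s = symmDiff ({i} : Finset (Fin n)) s := by
        ext j; simp [Finset.mem_symmDiff]; by_cases hj : j = i <;> simp [hj, his] <;> tauto
      rw [h1, ← ind_add, ind_singleton]
    rw [this]
    congr 1
    module

lemma mulOp_apply' {n : ℕ} (g f : V n) (x : Fin n → ZMod 2) :
    mulOp g f x = g x * f x := rfl

lemma sum_powerset_indicator {n : ℕ} (Q A : Finset (Fin n)) :
    (∑ u ∈ A.powerset, if Q ⊆ u then (1 : ZMod 2) else 0) =
      if Q = A then 1 else 0 := by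
  induction A using Finset.induction_on generalizing Q with
  | empty =>
    simp only [Finset.powerset_empty, Finset.sum_singleton, Finset.subset_empty]
  | @insert i A hi ih =>
    rw [Finset.sum_powerset_insert hi]
    by_cases hiQ : i ∈ Q
    · have h1 : (∑ u ∈ A.powerset, if Q ⊆ u then (1 : ZMod 2) else 0) = 0 := by
        apply Finset.sum_eq_zero
        intro u hu
        rw [Finset.mem_powerset] at hu
        have : ¬ Q ⊆ u := fun h => hi (hu (h hiQ))
        simp [this]
      have h2 : ∀ u : Finset (Fin n),
          (if Q ⊆ insert i u then (1 : ZMod 2) else 0) =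
            (if Q.erase i ⊆ u then (1 : ZMod 2) else 0) := by
        intro u
        by_cases h : Q.erase i ⊆ u
        · rw [if_pos (Finset.subset_insert_iff.mpr h), if_pos h]
        · rw [if_neg (fun hh => h (Finset.subset_insert_iff.mp hh)), if_neg h]
      simp only [h2]
      rw [h1, ih, zero_add]
      have : Q.erase i = A ↔ Q = insert i A := by
        constructor
        · intro h; rw [← h, Finset.insert_erase hiQ]
        · intro h; rw [h, Finset.erase_insert hi]
      by_cases h : Q.erase i = A
      · rw [if_pos h, if_pos (this.mp h)]
      · rw [if_neg h, if_neg (fun hh => h (this.mpr hh))]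
    · have h2 : ∀ u : Finset (Fin n), u ∈ A.powerset →
          (if Q ⊆ insert i u then (1 : ZMod 2) else 0) =
            (if Q ⊆ u then (1 : ZMod 2) else 0) := by
        intro u _
        have : Q ⊆ insert i u ↔ Q ⊆ u := by
          rw [Finset.subset_insert_iff, Finset.erase_eq_of_notMem hiQ]
        by_cases h : Q ⊆ u
        · rw [if_pos h, if_pos (this.mpr h)]
        · rw [if_neg h, if_neg (fun hh => h (this.mp hh))]
      rw [Finset.sum_congr rfl h2, ih]
      have hne : Q ≠ insert i A := by
        intro h; exact hiQ (h ▸ Finset.mem_insert_self i A)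
      rw [if_neg hne]
      by_cases h : Q = A <;> simp [h] <;> decide

lemma sdiff_subset_union_iff {n : ℕ} (t d u : Finset (Fin n)) :
    t \ d ⊆ u ↔ t ⊆ d ∪ u := by
  constructor
  · intro h i hi
    by_cases hd : i ∈ d
    · exact Finset.mem_union_left _ hd
    · exact Finset.mem_union_right _ (h (Finset.mem_sdiff.mpr ⟨hi, hd⟩))
  · intro h i hi
    rw [Finset.mem_sdiff] at hi
    rcases Finset.mem_union.mp (h hi.1) with h' | h'
    · exact absurd h' hi.2
    · exact h'

lemma comb {n : ℕ} (g : Finset (Fin n) → ZMod 2) (d S : Finset (Fin n)) :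
    ∑ t ∈ d.powerset, g (symmDiff S t) =
      ∑ e ∈ Finset.univ.filter (fun e : Finset (Fin n) => d ⊆ e ∧ e \ d ⊆ S),
        ∑ t ∈ e.powerset, g t := by
  have step1 :
      ∑ e ∈ Finset.univ.filter (fun e : Finset (Fin n) => d ⊆ e ∧ e \ d ⊆ S),
        ∑ t ∈ e.powerset, g t
      = ∑ u ∈ (S \ d).powerset, ∑ t ∈ (d ∪ u).powerset, g t := by
    refine Finset.sum_nbij' (fun e => e \ d) (fun u => d ∪ u) ?_ ?_ ?_ ?_ ?_
    · intro e he
      rw [Finset.mem_filter] at he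
      rw [Finset.mem_powerset]
      intro i hi
      rw [Finset.mem_sdiff] at hi ⊢
      exact ⟨he.2.2 (Finset.mem_sdiff.mpr hi), hi.2⟩
    · intro u hu
      rw [Finset.mem_powerset] at hu
      rw [Finset.mem_filter]
      refine ⟨Finset.mem_univ _, Finset.subset_union_left, ?_⟩
      have hdisj : Disjoint d u := by
        rw [Finset.disjoint_left]
        intro i hid hiu
        exact (Finset.mem_sdiff.mp (hu hiu)).2 hid
      rw [Finset.union_sdiff_cancel_left hdisj]
      exact hu.trans Finset.sdiff_subset
    · intro e he
      rw [Finset.mem_filter] at he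
      exact Finset.union_sdiff_of_subset he.2.1
    · intro u hu
      rw [Finset.mem_powerset] at hu
      apply Finset.union_sdiff_cancel_left
      rw [Finset.disjoint_left]
      intro i hid hiu
      exact (Finset.mem_sdiff.mp (hu hiu)).2 hid
    · intro e he
      rw [Finset.mem_filter] at he
      rw [Finset.union_sdiff_of_subset he.2.1]
  rw [step1]
  have step2 : ∀ u : Finset (Fin n), ∑ t ∈ (d ∪ u).powerset, g t
      = ∑ t ∈ (Finset.univ : Finset (Finset (Fin n))), if t ⊆ d ∪ u then g t else 0 := by
    intro u
    rw [← Finset.sum_filter]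
    apply Finset.sum_congr _ (fun _ _ => rfl)
    ext t
    simp only [Finset.mem_powerset, Finset.mem_filter, Finset.mem_univ, true_and]
  rw [Finset.sum_congr rfl (fun u _ => step2 u), Finset.sum_comm]
  have step3 : ∀ t : Finset (Fin n),
      (∑ u ∈ (S \ d).powerset, if t ⊆ d ∪ u then g t else 0)
        = if t \ d = S \ d then g t else 0 := by
    intro t
    have h1 : ∀ u : Finset (Fin n), (if t ⊆ d ∪ u then g t else 0)
        = (if t \ d ⊆ u then (1 : ZMod 2) else 0) * g t := by
      intro u
      by_cases h : t \ d ⊆ u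
      · rw [if_pos ((sdiff_subset_union_iff t d u).mp h), if_pos h, one_mul]
      · rw [if_neg (fun hh => h ((sdiff_subset_union_iff t d u).mpr hh)), if_neg h, zero_mul]
    simp only [h1]
    rw [← Finset.sum_mul, sum_powerset_indicator]
    by_cases h : t \ d = S \ d <;> simp [h]
  rw [Finset.sum_congr rfl (fun t _ => step3 t), Finset.sum_ite, Finset.sum_const_zero, add_zero]
  refine (Finset.sum_nbij' (fun t => symmDiff S t) (fun t => symmDiff S t) ?_ ?_ ?_ ?_ ?_).symm
  · intro t ht
    rw [Finset.mem_filter] at ht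
    rw [Finset.mem_powerset]
    intro i hi
    by_contra hid
    rw [Finset.mem_symmDiff] at hi
    have h1 : i ∈ S \ d ↔ i ∈ t \ d := by rw [ht.2]
    rw [Finset.mem_sdiff, Finset.mem_sdiff] at h1
    simp only [hid, not_false_iff, and_true] at h1
    tauto
  · intro t ht
    rw [Finset.mem_powerset] at ht
    rw [Finset.mem_filter]
    refine ⟨Finset.mem_univ _, ?_⟩
    ext i
    rw [Finset.mem_sdiff, Finset.mem_sdiff, Finset.mem_symmDiff]
    constructor
    · rintro ⟨h1, h2⟩
      rcases h1 with ⟨hS, hnt⟩ | ⟨hT, hnS⟩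
      · exact ⟨hS, h2⟩
      · exact absurd (ht hT) h2
    · rintro ⟨hS, hnd⟩
      exact ⟨Or.inl ⟨hS, fun hT => hnd (ht hT)⟩, hnd⟩
  · intro t _; exact symmDiff_symmDiff_cancel_left S t
  · intro t _; exact symmDiff_symmDiff_cancel_left S t
  · intro t _; rw [symmDiff_symmDiff_cancel_left]

end Aux


lemma main_eq {n : ℕ} (a b c d : Finset (Fin n)) :
    mulOp (mFun a) * derivPow b * mulOp (mFun c) * derivPow d =
      ∑ e ∈ Finset.univ.filter (fun e : Finset (Fin n) =>
          d ⊆ e ∧ e \ d ⊆ symmDiff a c ∧ symmDiff a c ⊆ b),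
        mulOp (mFun a) * derivPow e := by
  apply LinearMap.ext
  intro f
  funext x
  have lhs_eq :
      (mulOp (mFun a) * derivPow b * mulOp (mFun c) * derivPow d) f x
        = mFun a x * ∑ s ∈ b.powerset,
            mFun c (x + ind s) * ∑ t ∈ d.powerset, f (x + ind s + ind t) := by
    show mulOp (mFun a) (derivPow b (mulOp (mFun c) (derivPow d f))) x = _
    rw [mulOp_apply', derivPow_apply]
    congr 1
    apply Finset.sum_congr rfl
    intro s _
    rw [mulOp_apply', derivPow_apply]
  have rhs_eq :
      ((∑ e ∈ Finset.univ.filter (fun e : Finset (Fin n) =>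
          d ⊆ e ∧ e \ d ⊆ symmDiff a c ∧ symmDiff a c ⊆ b),
        mulOp (mFun a) * derivPow e) f) x
      = ∑ e ∈ Finset.univ.filter (fun e : Finset (Fin n) =>
          d ⊆ e ∧ e \ d ⊆ symmDiff a c ∧ symmDiff a c ⊆ b),
          mFun a x * ∑ t ∈ e.powerset, f (x + ind t) := by
    rw [LinearMap.sum_apply, Finset.sum_apply]
    apply Finset.sum_congr rfl
    intro e _
    show mulOp (mFun a) (derivPow e f) x = _
    rw [mulOp_apply', derivPow_apply]
  rw [lhs_eq, rhs_eq]
  by_cases hx : x = ind a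
  · subst hx
    have ha1 : mFun a (ind a) = 1 := by simp [mFun]
    rw [ha1]
    simp only [one_mul]
    have hc : ∀ s : Finset (Fin n), mFun c (ind a + ind s)
        = if s = symmDiff a c then 1 else 0 := by
      intro s
      rw [ind_add]
      by_cases h : s = symmDiff a c
      · rw [if_pos h, h, symmDiff_symmDiff_cancel_left]
        simp [mFun]
      · rw [if_neg h]
        have hne : symmDiff a s ≠ c := by
          intro hh
          apply h
          rw [← hh, symmDiff_symmDiff_cancel_left]
        have : ind (symmDiff a s) ≠ ind c := fun hh => hne (ind_injective hh)
        simp [mFun, this]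
    have hterm : ∀ s ∈ b.powerset,
        (mFun c (ind a + ind s) * ∑ t ∈ d.powerset, f (ind a + ind s + ind t))
          = if s = symmDiff a c then (∑ t ∈ d.powerset, f (ind a + ind s + ind t)) else 0 := by
      intro s _
      rw [hc s]
      by_cases h : s = symmDiff a c <;> simp [h]
    rw [Finset.sum_congr rfl hterm, Finset.sum_ite_eq' b.powerset (symmDiff a c)]
    set S := symmDiff a c with hS
    set g : Finset (Fin n) → ZMod 2 := fun u => f (ind a + ind u) with hg
    have hgrw : ∀ t : Finset (Fin n), f (ind a + ind S + ind t) = g (symmDiff S t) := by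
      intro t
      rw [hg]
      simp only [add_assoc, ind_add]
      rw [symmDiff_assoc]
    by_cases hb : S ⊆ b
    · rw [if_pos (Finset.mem_powerset.mpr hb)]
      have hfilter : Finset.univ.filter (fun e : Finset (Fin n) =>
            d ⊆ e ∧ e \ d ⊆ S ∧ S ⊆ b)
          = Finset.univ.filter (fun e : Finset (Fin n) => d ⊆ e ∧ e \ d ⊆ S) := by
        apply Finset.filter_congr
        intro e _
        simp [hb]
      rw [hfilter]
      rw [Finset.sum_congr rfl (fun t _ => hgrw t)]
      exact comb g d S
    · rw [if_neg (fun hh => hb (Finset.mem_powerset.mp hh))]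
      have hfilter : Finset.univ.filter (fun e : Finset (Fin n) =>
            d ⊆ e ∧ e \ d ⊆ S ∧ S ⊆ b) = ∅ := by
        rw [Finset.filter_eq_empty_iff]
        intro e _
        exact fun h => hb h.2.2
      rw [hfilter, Finset.sum_empty]
  · have ha0 : mFun a x = 0 := by simp [mFun, hx]
    rw [ha0, zero_mul]
    symm
    apply Finset.sum_eq_zero
    intro e _
    exact zero_mul _


/-- `m^a y^b m^c y^d = Σ m^a y^e`, summed over `e` with `d ⊆ e` and
`e \ d ⊆ a + c ⊆ b`; in particular the product is `0` unless `a + c ⊆ b`. -/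
theorem mOp_derivPow_mul (n : ℕ) (a b c d : Finset (Fin n)) :
    mulOp (mFun a) * derivPow b * mulOp (mFun c) * derivPow d =
      ∑ e ∈ Finset.univ.filter (fun e : Finset (Fin n) =>
          d ⊆ e ∧ e \ d ⊆ symmDiff a c ∧ symmDiff a c ⊆ b),
        mulOp (mFun a) * derivPow e ∧
    (¬ symmDiff a c ⊆ b →
      mulOp (mFun a) * derivPow b * mulOp (mFun c) * derivPow d = 0) := by
  refine ⟨main_eq a b c d, fun h => ?_⟩
  rw [main_eq a b c d]
  have hfilter : Finset.univ.filter (fun e : Finset (Fin n) =>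
        d ⊆ e ∧ e \ d ⊆ symmDiff a c ∧ symmDiff a c ⊆ b) = ∅ := by
    rw [Finset.filter_eq_empty_iff]
    intro e _
    exact fun hh => h hh.2.2
  rw [hfilter, Finset.sum_empty]
end

section
/- Let f = Σ_{a ⊆ [n]} y^a be the sum of all Boolean derivative monomials, an operator on functions Z_2^n → Z_2. Then for k ≥ 2, f^k = f if k is odd and f^k = 1 (the identity operator) if k is even. -/
open Finset

lemma shiftPow_apply {n : ℕ} (b : Finset (Fin n)) (f : V n) (x : Fin n → ZMod 2) :
    shiftPow b f x = f (x + ∑ i ∈ b, Pi.single i 1) := by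
  induction b using Finset.induction_on generalizing x with
  | empty =>
    simp [shiftPow]
    exact congrArg (fun g : Module.End (ZMod 2) (V n) => g f x) (Finset.noncommProd_empty _ _)
  | insert _ _ hi ih =>
    erw [shiftPow, Finset.noncommProd_insert_of_notMem _ _ _ _ hi]
    show shiftOp _ (shiftPow _ f) x = _
    show (shiftPow _ f) (x + Pi.single _ 1) = _
    rw [ih, Finset.sum_insert hi, ← add_assoc]

lemma shiftPow_mul_self {n : ℕ} (b : Finset (Fin n)) : shiftPow b * shiftPow b = 1 := by
  apply LinearMap.ext; intro f; funext x
  show shiftPow b (shiftPow b f) x = f x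
  rw [shiftPow_apply, shiftPow_apply, add_assoc]
  have : (∑ i ∈ b, Pi.single i 1 : Fin n → ZMod 2) + ∑ i ∈ b, Pi.single i 1 = 0 := by
    funext j; simp [show ∀ z : ZMod 2, z + z = 0 from by decide]
  rw [this, add_zero]

lemma derivPow_eq_sum {n : ℕ} (a : Finset (Fin n)) :
    derivPow a = ∑ c ∈ a.powerset, shiftPow c := by
  induction a using Finset.induction_on with
  | empty =>
    simp [derivPow, shiftPow]
    exact (Finset.noncommProd_empty _ _).trans (Finset.noncommProd_empty _ _).symm
  | @insert i a hi ih =>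
    erw [derivPow, Finset.noncommProd_insert_of_notMem _ _ _ _ hi, ← derivPow,
      derivOp_eq_shiftOp_add_one, ih, Finset.powerset_insert, Finset.sum_union, add_mul, one_mul,
      Finset.mul_sum, Finset.sum_image (fun c hc d hd h => by
        have hc' := Finset.mem_powerset.1 hc
        have hd' := Finset.mem_powerset.1 hd
        have : (insert i c).erase i = (insert i d).erase i := by rw [h]
        rwa [Finset.erase_insert (fun h => hi (hc' h)),
          Finset.erase_insert (fun h => hi (hd' h))] at this)]
    · rw [add_comm]
      congr 1
      apply Finset.sum_congr rfl
      intro c hc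
      have hic : i ∉ c := fun h => hi (Finset.mem_powerset.1 hc h)
      exact (Finset.noncommProd_insert_of_notMem _ _ _ _ hic).symm
    · rw [Finset.disjoint_left]
      intro c hc hc2
      obtain ⟨d, hd, rfl⟩ := Finset.mem_image.1 hc2
      exact hi (Finset.mem_powerset.1 hc (Finset.mem_insert_self i d))

lemma sum_derivPow_eq {n : ℕ} :
    (∑ a : Finset (Fin n), derivPow a) = shiftPow Finset.univ := by
  simp only [derivPow_eq_sum]
  have h1 : ∀ a : Finset (Fin n), a.powerset = Finset.univ.filter (· ⊆ a) := by
    intro a; ext c; simp [Finset.mem_powerset]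
  calc (∑ a : Finset (Fin n), ∑ c ∈ a.powerset, shiftPow c)
      = ∑ a : Finset (Fin n), ∑ c : Finset (Fin n), if c ⊆ a then shiftPow c else 0 := by
        refine Finset.sum_congr rfl fun a _ => ?_
        rw [h1 a, Finset.sum_filter]
    _ = ∑ c : Finset (Fin n), (Finset.univ.filter (fun a => c ⊆ a)).card • shiftPow c := by
        rw [Finset.sum_comm]
        refine Finset.sum_congr rfl fun c _ => ?_
        rw [← Finset.sum_filter, Finset.sum_const]
    _ = shiftPow Finset.univ := by
        rw [Finset.sum_eq_single Finset.univ]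
        · simp [Finset.univ_subset_iff, Finset.filter_eq']
        · intro c _ hc
          have hcard : (Finset.univ.filter (fun a => c ⊆ a)).card = 2 ^ (cᶜ.card) := by
            rw [← Finset.card_powerset]
            apply Finset.card_bij (fun a _ => a \ c)
            · intro a ha
              rw [Finset.mem_powerset]
              intro x hx
              rw [Finset.mem_sdiff] at hx
              simpa using hx.2
            · intro a ha b hb h
              simp only [Finset.mem_filter] at ha hb
              rw [← Finset.sdiff_union_of_subset ha.2, ← Finset.sdiff_union_of_subset hb.2, h]
            · intro d hd
              refine ⟨d ∪ c, ?_, ?_⟩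
              · simp [Finset.mem_filter]
              · rw [Finset.union_sdiff_right, Finset.sdiff_eq_self_iff_disjoint]
                rw [Finset.mem_powerset] at hd
                exact Finset.disjoint_left.2 fun x hx hxc => by
                  have := hd hx; simp at this; exact this hxc
          have hpos : 0 < cᶜ.card := Finset.card_pos.2 (by
            rw [Finset.nonempty_iff_ne_empty]
            intro h
            exact hc (by simpa [Finset.compl_eq_empty_iff] using h))
          rw [hcard, ← Nat.cast_smul_eq_nsmul (ZMod 2)]
          have h2 : ((2:ℕ) : ZMod 2) = 0 := by decide
          rw [Nat.cast_pow, h2, zero_pow hpos.ne', zero_smul]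
        · intro h; exact absurd (Finset.mem_univ _) h

/-- Let `f = Σ_{a ⊆ [n]} y^a` be the sum of all Boolean derivative monomials.
For `k ≥ 2`, `f^k = f` if `k` is odd and `f^k = 1` if `k` is even. -/
theorem sum_derivPow_pow (n : ℕ) (k : ℕ) (hk : 2 ≤ k) :
    (Odd k → (∑ a : Finset (Fin n), derivPow a) ^ k = ∑ a : Finset (Fin n), derivPow a) ∧
    (Even k → (∑ a : Finset (Fin n), derivPow a) ^ k = 1) := by
  rw [sum_derivPow_eq]
  have hsq : shiftPow (Finset.univ : Finset (Fin n)) ^ 2 = 1 := by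
    rw [sq]; exact shiftPow_mul_self _
  constructor
  · rintro ⟨m, rfl⟩
    rw [pow_succ, pow_mul, hsq, one_pow, one_mul]
  · rintro ⟨m, rfl⟩
    rw [← two_mul, pow_mul, hsq, one_pow]
end
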